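/- arXiv:1202.0473 — 2 statements merged into one kernel-verified Lean document; each statement's English description precedes it below -/
import Mathlib

section
/- Let $A, B, X \in \mathbb{M}_n$ be such that the block matrix $M = \begin{bmatrix} A & X \\ X^* & B \end{bmatrix} \in \mathbb{M}_{2n}$ is positive semi-definite. Then there exist unitary matrices $U, V \in \mathbb{M}_{2n}$ such that $M = U \begin{bmatrix} \frac{A+B}{2} + \mathrm{Re}\,X & 0 \\ 0 & 0 \end{bmatrix} U^* + V \begin{bmatrix} 0 & 0 \\ 0 & \frac{A+B}{2} - \mathrm{Re}\,X \end{bmatrix} V^*$. -/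
open Matrix
open scoped ComplexOrder

/-- The absolute value `|Z| = (Zᴴ Z)^(1/2)` of a square complex matrix. -/
noncomputable def matAbs {m : Type*} [Fintype m] [DecidableEq m]
    (Z : Matrix m m ℂ) : Matrix m m ℂ :=
  ((Matrix.posSemidef_conjTranspose_mul_self Z).1.eigenvectorUnitary : Matrix m m ℂ) *
    Matrix.diagonal ((↑) ∘ (√·) ∘ (Matrix.posSemidef_conjTranspose_mul_self Z).1.eigenvalues) *
    (star (Matrix.posSemidef_conjTranspose_mul_self Z).1.eigenvectorUnitary : Matrix m m ℂ)

/-- Functional calculus: apply `f : ℝ → ℝ` to the eigenvalues of a Hermitian matrix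
(junk value `0` if the matrix is not Hermitian). -/
noncomputable def hermApply {m : Type*} [Fintype m] [DecidableEq m]
    (f : ℝ → ℝ) (S : Matrix m m ℂ) : Matrix m m ℂ :=
  if hS : S.IsHermitian then
    (hS.eigenvectorUnitary : Matrix m m ℂ) *
      Matrix.diagonal (fun i => (f (hS.eigenvalues i) : ℂ)) *
      (star (hS.eigenvectorUnitary : Matrix m m ℂ))
  else 0

/-- Real power of a positive semi-definite matrix by functional calculus. -/
noncomputable def matPow {m : Type*} [Fintype m] [DecidableEq m]
    (S : Matrix m m ℂ) (p : ℝ) : Matrix m m ℂ :=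
  hermApply (fun x => x ^ p) S

/-- A symmetric (unitarily invariant) norm on complex `m × m` matrices. -/
structure IsSymmetricNorm {m : Type*} [Fintype m] [DecidableEq m]
    (N : Matrix m m ℂ → ℝ) : Prop where
  add_le : ∀ A B, N (A + B) ≤ N A + N B
  smul : ∀ (c : ℂ) (A), N (c • A) = ‖c‖ * N A
  eq_zero_of : ∀ A, N A = 0 → A = 0
  unitary_mul_left : ∀ (U : Matrix.unitaryGroup m ℂ) (A), N (U * A) = N A
  mul_unitary_right : ∀ (U : Matrix.unitaryGroup m ℂ) (A), N (A * U) = N A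

/-- Eigenvalues of a Hermitian matrix (junk value `0` if not Hermitian). -/
noncomputable def eigVals {m : Type*} [Fintype m] [DecidableEq m]
    (Z : Matrix m m ℂ) : m → ℝ :=
  if hZ : Z.IsHermitian then hZ.eigenvalues else 0

/-- Eigenvalues of a Hermitian `n × n` matrix listed in decreasing order. -/
noncomputable def eigDown {n : ℕ} (Z : Matrix (Fin n) (Fin n) ℂ) : Fin n → ℝ :=
  fun i => (eigVals Z ∘ Tuple.sort (eigVals Z)) i.rev

/-- `Z ^ ↓`: the diagonal matrix listing the eigenvalues of `Z` in decreasing order. -/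
noncomputable def downMat {n : ℕ} (Z : Matrix (Fin n) (Fin n) ℂ) : Matrix (Fin n) (Fin n) ℂ :=
  Matrix.diagonal (fun i => (eigDown Z i : ℂ))

/-- Schatten `p`-norm. -/
noncomputable def schattenNorm {m : Type*} [Fintype m] [DecidableEq m]
    (p : ℝ) (Z : Matrix m m ℂ) : ℝ :=
  (∑ i, eigVals (matAbs Z) i ^ p) ^ (1 / p)

/-- Operator norm (largest singular value). -/
noncomputable def opNormInf {m : Type*} [Fintype m] [DecidableEq m]
    (Z : Matrix m m ℂ) : ℝ :=
  ⨆ i, Real.sqrt (eigVals (Zᴴ * Z) i)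

/-- Numerical range. -/
def numRange {m : Type*} [Fintype m] (X : Matrix m m ℂ) : Set ℂ :=
  {z | ∃ x : m → ℂ, ∑ i, ‖x i‖ ^ 2 = 1 ∧ dotProduct (star x) (X *ᵥ x) = z}

/-- Numerical radius. -/
noncomputable def numRadius {m : Type*} [Fintype m] (X : Matrix m m ℂ) : ℝ :=
  sSup ((fun z : ℂ => ‖z‖) '' numRange X)
open Polynomial

section Helpers

variable {m : Type*} [Fintype m] [DecidableEq m]

lemma my_charpoly_conj {R : Type*} [CommRing R] (P Q M : Matrix m m R) (hPQ : P * Q = 1) :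
    (P * M * Q).charpoly = M.charpoly := by
  have hmap : (C : R →+* R[X]).mapMatrix P * (C : R →+* R[X]).mapMatrix Q = 1 := by
    rw [← _root_.map_mul, hPQ, _root_.map_one]
  have hcm : charmatrix (P * M * Q) =
      (C : R →+* R[X]).mapMatrix P * charmatrix M * (C : R →+* R[X]).mapMatrix Q := by
    unfold charmatrix
    rw [_root_.map_mul, _root_.map_mul, mul_sub, sub_mul]
    congr 1
    rw [mul_assoc, (scalar_commute (X : R[X]) (Commute.all _) _).eq, ← mul_assoc, hmap, one_mul]
  have hdet : ((C : R →+* R[X]).mapMatrix P).det * ((C : R →+* R[X]).mapMatrix Q).det = 1 := by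
    rw [← det_mul, hmap, det_one]
  rw [Matrix.charpoly, Matrix.charpoly, hcm, det_mul, det_mul]
  linear_combination M.charmatrix.det * hdet

lemma my_charpoly_mul_comm (A B : Matrix m m ℂ) : (A * B).charpoly = (B * A).charpoly := by
  have hEE' : (fromBlocks 1 A 0 1 : Matrix (m ⊕ m) (m ⊕ m) ℂ) * fromBlocks 1 (-A) 0 1 = 1 := by
    rw [fromBlocks_multiply]
    simp [fromBlocks_one]
  have key : (fromBlocks 1 A 0 1 : Matrix (m ⊕ m) (m ⊕ m) ℂ) * fromBlocks 0 0 B (B * A) *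
      fromBlocks 1 (-A) 0 1 = fromBlocks (A * B) 0 B 0 := by
    rw [fromBlocks_multiply, fromBlocks_multiply]
    congr 1 <;> simp [Matrix.mul_assoc] <;> ring_nf <;> simp [Matrix.mul_assoc]
  have h1 := my_charpoly_conj _ _ (fromBlocks 0 0 B (B * A)) hEE'
  rw [key, Matrix.charpoly_fromBlocks_zero₁₂, Matrix.charpoly_fromBlocks_zero₁₂] at h1
  have h0 : (0 : Matrix m m ℂ).charpoly ≠ 0 := (Matrix.charpoly_monic _).ne_zero
  exact (mul_left_cancel₀ h0 (show (0 : Matrix m m ℂ).charpoly * (A * B).charpoly =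
    (0 : Matrix m m ℂ).charpoly * (B * A).charpoly by linear_combination h1))

lemma my_charpoly_diagonal (d : m → ℂ) :
    (Matrix.diagonal d).charpoly = ∏ i, (X - C (d i)) := by
  have : charmatrix (Matrix.diagonal d) = Matrix.diagonal fun i => (X - C (d i)) := by
    ext i j
    by_cases h : i = j
    · subst h; simp [charmatrix_apply]
    · simp [charmatrix_apply, Matrix.diagonal_apply_ne _ h]
  rw [Matrix.charpoly, this, det_diagonal]

lemma my_charpoly_isHermitian {H : Matrix m m ℂ} (hH : H.IsHermitian) :
    H.charpoly = ∏ i, (X - C (hH.eigenvalues i : ℂ)) := by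
  have hU : (hH.eigenvectorUnitary : Matrix m m ℂ) *
      star (hH.eigenvectorUnitary : Matrix m m ℂ) = 1 :=
    Matrix.mem_unitaryGroup_iff.mp hH.eigenvectorUnitary.2
  conv_lhs => rw [hH.spectral_theorem, Unitary.conjStarAlgAut_apply]
  rw [my_charpoly_conj _ _ _ hU, my_charpoly_diagonal]
  rfl

end Helpers

section Perm

lemma my_multiset_ofFn {N : ℕ} (f : Fin N → ℝ) :
    (Finset.univ.val.map f : Multiset ℝ) = ↑(List.ofFn f) := by
  rw [Fin.univ_def, List.ofFn_eq_map]
  rfl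

lemma my_map_perm {α : Type*} [Fintype α] [DecidableEq α] {β : Type*} (f : α → β)
    (σ : Equiv.Perm α) :
    Finset.univ.val.map (f ∘ σ) = Finset.univ.val.map f := by
  have h : (Finset.univ.val.map (⇑σ) : Multiset α) = Finset.univ.val := by
    simpa using congrArg Finset.val (Finset.map_univ_equiv σ)
  calc Finset.univ.val.map (f ∘ σ) = (Finset.univ.val.map ⇑σ).map f := by
        rw [Multiset.map_map]
    _ = Finset.univ.val.map f := by rw [h]

lemma my_exists_perm_fin {N : ℕ} (a b : Fin N → ℝ)
    (h : Finset.univ.val.map a = Finset.univ.val.map b) :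
    ∃ e : Equiv.Perm (Fin N), a = b ∘ e := by
  have ha : Monotone (a ∘ Tuple.sort a) := Tuple.monotone_sort a
  have hb : Monotone (b ∘ Tuple.sort b) := Tuple.monotone_sort b
  have key : List.ofFn (a ∘ Tuple.sort a) = List.ofFn (b ∘ Tuple.sort b) := by
    refine List.Perm.eq_of_sortedLE ha.sortedLE_ofFn hb.sortedLE_ofFn ?_
    rw [← Multiset.coe_eq_coe, ← my_multiset_ofFn, ← my_multiset_ofFn,
      my_map_perm, my_map_perm, h]
  have key2 : a ∘ Tuple.sort a = b ∘ Tuple.sort b := List.ofFn_injective key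
  refine ⟨(Tuple.sort a).symm.trans (Tuple.sort b), ?_⟩
  funext i
  have := congrFun key2 ((Tuple.sort a).symm i)
  simpa using this

lemma my_exists_perm {α : Type*} [Fintype α] [DecidableEq α] (a b : α → ℝ)
    (h : Finset.univ.val.map a = Finset.univ.val.map b) :
    ∃ e : Equiv.Perm α, a = b ∘ e := by
  set e0 := Fintype.equivFin α
  have h0 : ∀ f : α → ℝ, Finset.univ.val.map (f ∘ ⇑e0.symm) = Finset.univ.val.map f := by
    intro f
    have h1 : (Finset.univ.val.map (⇑e0.symm) : Multiset α) = Finset.univ.val := by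
      simpa using congrArg Finset.val (Finset.map_univ_equiv e0.symm)
    rw [← Multiset.map_map, h1]
  obtain ⟨e, he⟩ := my_exists_perm_fin (a ∘ ⇑e0.symm) (b ∘ ⇑e0.symm) (by rw [h0, h0, h])
  refine ⟨e0.trans (e.trans e0.symm), ?_⟩
  funext i
  have := congrFun he (e0 i)
  simpa using this

end Perm

section Sim

variable {m : Type*} [Fintype m] [DecidableEq m]

lemma my_multiset_eq_of_prod (a b : m → ℝ)
    (h : ∏ i, (X - C ((a i : ℂ))) = ∏ i, (X - C ((b i : ℂ)))) :
    Finset.univ.val.map a = Finset.univ.val.map b := by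
  have hr : ∀ c : m → ℝ, (∏ i, (X - C ((c i : ℂ)))).roots =
      Finset.univ.val.map (fun i => ((c i : ℝ) : ℂ)) := by
    intro c
    have : ∏ i, (X - C ((c i : ℂ))) =
        ((Finset.univ.val.map (fun i => ((c i : ℝ) : ℂ))).map (fun r => X - C r)).prod := by
      rw [Multiset.map_map]
      rfl
    rw [this, Polynomial.roots_multiset_prod_X_sub_C]
  have h2 : Finset.univ.val.map (fun i => ((a i : ℝ) : ℂ)) =
      Finset.univ.val.map (fun i => ((b i : ℝ) : ℂ)) := by
    rw [← hr, ← hr, h]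
  apply Multiset.map_injective (f := (fun r : ℝ => (r : ℂ))) Complex.ofReal_injective
  rw [Multiset.map_map, Multiset.map_map]
  exact h2

lemma my_diagonal_perm_conj (d : m → ℂ) (e : Equiv.Perm m) :
    ∃ U : Matrix.unitaryGroup m ℂ, Matrix.diagonal (d ∘ e) =
      (U : Matrix m m ℂ) * Matrix.diagonal d * (U : Matrix m m ℂ)ᴴ := by
  have hstar : star ((1 : Matrix m m ℂ).submatrix ⇑e id) = (1 : Matrix m m ℂ).submatrix id ⇑e := by
    rw [Matrix.star_eq_conjTranspose, Matrix.conjTranspose_submatrix, Matrix.conjTranspose_one]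
  have hmem : (1 : Matrix m m ℂ).submatrix ⇑e id ∈ Matrix.unitaryGroup m ℂ := by
    rw [Matrix.mem_unitaryGroup_iff, hstar]
    have := Matrix.submatrix_mul_equiv (1 : Matrix m m ℂ) (1 : Matrix m m ℂ)
      ⇑e (Equiv.refl m) ⇑e
    simpa using this
  refine ⟨⟨_, hmem⟩, ?_⟩
  have h1 : ((1 : Matrix m m ℂ).submatrix ⇑e id) * Matrix.diagonal d =
      (Matrix.diagonal d).submatrix ⇑e id := by
    have := Matrix.submatrix_mul_equiv (1 : Matrix m m ℂ) (Matrix.diagonal d)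
      ⇑e (Equiv.refl m) id
    simpa using this
  have h2 : (Matrix.diagonal d).submatrix ⇑e id * ((1 : Matrix m m ℂ).submatrix id ⇑e) =
      (Matrix.diagonal d).submatrix ⇑e ⇑e := by
    have := Matrix.submatrix_mul_equiv (Matrix.diagonal d) (1 : Matrix m m ℂ)
      ⇑e (Equiv.refl m) ⇑e
    simpa using this
  rw [Matrix.conjTranspose_submatrix, Matrix.conjTranspose_one, h1, h2,
    Matrix.submatrix_diagonal_equiv]

lemma my_exists_unitary_conj (Cm : Matrix m m ℂ) :
    ∃ U : Matrix.unitaryGroup m ℂ,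
      Cm * Cmᴴ = (U : Matrix m m ℂ) * (Cmᴴ * Cm) * (U : Matrix m m ℂ)ᴴ := by
  have hH1 : (Cm * Cmᴴ).IsHermitian := Matrix.isHermitian_mul_conjTranspose_self Cm
  have hH2 : (Cmᴴ * Cm).IsHermitian := Matrix.isHermitian_conjTranspose_mul_self Cm
  have hcp : (Cm * Cmᴴ).charpoly = (Cmᴴ * Cm).charpoly := my_charpoly_mul_comm _ _
  rw [my_charpoly_isHermitian hH1, my_charpoly_isHermitian hH2] at hcp
  obtain ⟨e, he⟩ := my_exists_perm _ _ (my_multiset_eq_of_prod _ _ hcp)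
  obtain ⟨P, hP⟩ := my_diagonal_perm_conj (fun i => ((hH2.eigenvalues i : ℝ) : ℂ)) e
  have hd : Matrix.diagonal ((fun i => ((hH1.eigenvalues i : ℝ) : ℂ))) =
      Matrix.diagonal ((fun i => ((hH2.eigenvalues i : ℝ) : ℂ)) ∘ e) := by
    rw [he]
    rfl
  set U1 := hH1.eigenvectorUnitary
  set U2 := hH2.eigenvectorUnitary
  have hu2 : star (U2 : Matrix m m ℂ) * (U2 : Matrix m m ℂ) = 1 := Matrix.mem_unitaryGroup_iff'.mp U2.2
  have hu2' : (U2 : Matrix m m ℂ) * star (U2 : Matrix m m ℂ) = 1 := Matrix.mem_unitaryGroup_iff.mp U2.2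
  have hD2 : star (U2 : Matrix m m ℂ) * (Cmᴴ * Cm) * (U2 : Matrix m m ℂ) =
      Matrix.diagonal (fun i => ((hH2.eigenvalues i : ℝ) : ℂ)) := by
    conv_lhs => rw [hH2.spectral_theorem]
    calc star (U2 : Matrix m m ℂ) *
        ((U2 : Matrix m m ℂ) * Matrix.diagonal (RCLike.ofReal ∘ hH2.eigenvalues) *
          star (U2 : Matrix m m ℂ)) * (U2 : Matrix m m ℂ)
        = (star (U2 : Matrix m m ℂ) * (U2 : Matrix m m ℂ)) *
          Matrix.diagonal (RCLike.ofReal ∘ hH2.eigenvalues) *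
          (star (U2 : Matrix m m ℂ) * (U2 : Matrix m m ℂ)) := by
          simp only [Matrix.mul_assoc]
      _ = Matrix.diagonal (fun i => ((hH2.eigenvalues i : ℝ) : ℂ)) := by
          rw [hu2, Matrix.one_mul, Matrix.mul_one]
          rfl
  refine ⟨U1 * P * star U2, ?_⟩
  have hcoe : (↑(U1 * P * star U2) : Matrix m m ℂ) =
      (U1 : Matrix m m ℂ) * (P : Matrix m m ℂ) * star (U2 : Matrix m m ℂ) := by
    simp
  rw [hcoe]
  conv_lhs => rw [hH1.spectral_theorem, Unitary.conjStarAlgAut_apply]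
  have hd1 : Matrix.diagonal (RCLike.ofReal ∘ hH1.eigenvalues) =
      (P : Matrix m m ℂ) * (star (U2 : Matrix m m ℂ) * (Cmᴴ * Cm) * (U2 : Matrix m m ℂ)) *
        (P : Matrix m m ℂ)ᴴ := by
    rw [hD2]
    calc Matrix.diagonal (RCLike.ofReal ∘ hH1.eigenvalues)
        = Matrix.diagonal ((fun i => ((hH2.eigenvalues i : ℝ) : ℂ)) ∘ e) := hd
      _ = (P : Matrix m m ℂ) * Matrix.diagonal (fun i => ((hH2.eigenvalues i : ℝ) : ℂ)) *
        (P : Matrix m m ℂ)ᴴ := hP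
  rw [hd1]
  simp only [Matrix.star_eq_conjTranspose, Matrix.conjTranspose_conjTranspose,
    Matrix.conjTranspose_mul, Matrix.mul_assoc]
  rfl

end Sim


theorem decomposition_re {n : ℕ} (A B X : Matrix (Fin n) (Fin n) ℂ)
    (hM : (Matrix.fromBlocks A X Xᴴ B).PosSemidef) :
    ∃ U V : Matrix.unitaryGroup (Fin n ⊕ Fin n) ℂ,
      Matrix.fromBlocks A X Xᴴ B =
        (U : Matrix (Fin n ⊕ Fin n) (Fin n ⊕ Fin n) ℂ) *
          Matrix.fromBlocks ((1 / 2 : ℂ) • (A + B) + (1 / 2 : ℂ) • (X + Xᴴ)) 0 0 0 *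
          (U : Matrix (Fin n ⊕ Fin n) (Fin n ⊕ Fin n) ℂ)ᴴ +
        (V : Matrix (Fin n ⊕ Fin n) (Fin n ⊕ Fin n) ℂ) *
          Matrix.fromBlocks 0 0 0 ((1 / 2 : ℂ) • (A + B) - (1 / 2 : ℂ) • (X + Xᴴ)) *
          (V : Matrix (Fin n ⊕ Fin n) (Fin n ⊕ Fin n) ℂ)ᴴ := by
  classical
  set M : Matrix (Fin n ⊕ Fin n) (Fin n ⊕ Fin n) ℂ := Matrix.fromBlocks A X Xᴴ B with hMdef
  set s : ℂ := (((Real.sqrt 2)⁻¹ : ℝ) : ℂ) with hsdef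
  have hs2 : s * s = 1 / 2 := by
    rw [hsdef, ← Complex.ofReal_mul]
    have : (Real.sqrt 2)⁻¹ * (Real.sqrt 2)⁻¹ = 1 / 2 := by
      rw [← mul_inv]
      rw [Real.mul_self_sqrt (by norm_num : (2:ℝ) ≥ 0)]
      norm_num
    rw [this]
    norm_num
  set F : Matrix (Fin n ⊕ Fin n) (Fin n ⊕ Fin n) ℂ := Matrix.fromBlocks 1 1 (-1) 1 with hFdef
  set W : Matrix (Fin n ⊕ Fin n) (Fin n ⊕ Fin n) ℂ := s • F with hWdef
  have hFH : Fᴴ = Matrix.fromBlocks 1 (-1) 1 1 := by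
    rw [hFdef, Matrix.fromBlocks_conjTranspose]
    simp
  have hWH : Wᴴ = s • Fᴴ := by
    rw [hWdef, Matrix.conjTranspose_smul, hsdef, RCLike.star_def, Complex.conj_ofReal]
  have hFFH : F * Fᴴ = (2 : ℂ) • 1 := by
    rw [hFH, hFdef, Matrix.fromBlocks_multiply, ← Matrix.fromBlocks_one, Matrix.fromBlocks_smul]
    congr 1 <;> simp <;> module
  have hFHF : Fᴴ * F = (2 : ℂ) • 1 := by
    rw [hFH, hFdef, Matrix.fromBlocks_multiply, ← Matrix.fromBlocks_one, Matrix.fromBlocks_smul]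
    congr 1 <;> simp <;> module
  have hWWH : W * Wᴴ = 1 := by
    rw [hWdef, hWH, Matrix.smul_mul, Matrix.mul_smul, hFFH, smul_smul, smul_smul, hs2]
    norm_num
  have hWHW : Wᴴ * W = 1 := by
    rw [hWdef, hWH, Matrix.smul_mul, Matrix.mul_smul, hFHF, smul_smul, smul_smul, hs2]
    norm_num
  set E1 : Matrix (Fin n ⊕ Fin n) (Fin n ⊕ Fin n) ℂ := Matrix.fromBlocks 1 0 0 0 with hE1def
  set E2 : Matrix (Fin n ⊕ Fin n) (Fin n ⊕ Fin n) ℂ := Matrix.fromBlocks 0 0 0 1 with hE2def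
  have hE1H : E1ᴴ = E1 := by rw [hE1def, Matrix.fromBlocks_conjTranspose]; simp
  have hE2H : E2ᴴ = E2 := by rw [hE2def, Matrix.fromBlocks_conjTranspose]; simp
  have hE1sq : E1 * E1 = E1 := by rw [hE1def, Matrix.fromBlocks_multiply]; simp
  have hE2sq : E2 * E2 = E2 := by rw [hE2def, Matrix.fromBlocks_multiply]; simp
  have hE12 : E1 + E2 = 1 := by
    rw [hE1def, hE2def, ← Matrix.fromBlocks_one, Matrix.fromBlocks_add]
    simp
  set S : Matrix (Fin n ⊕ Fin n) (Fin n ⊕ Fin n) ℂ := (open scoped MatrixOrder in CFC.sqrt M) with hSdef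
  have hSS : S * S = M := by
    open scoped MatrixOrder in exact CFC.sqrt_mul_sqrt_self M hM.nonneg
  have hSH : Sᴴ = S := by
    open scoped MatrixOrder in exact (CFC.sqrt_nonneg M).posSemidef.isHermitian
  set P : Matrix (Fin n ⊕ Fin n) (Fin n ⊕ Fin n) ℂ := Wᴴ * E1 * W with hPdef
  set Q : Matrix (Fin n ⊕ Fin n) (Fin n ⊕ Fin n) ℂ := Wᴴ * E2 * W with hQdef
  have hPH : Pᴴ = P := by
    rw [hPdef, Matrix.conjTranspose_mul, Matrix.conjTranspose_mul,
      Matrix.conjTranspose_conjTranspose, hE1H, Matrix.mul_assoc]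
  have hQH : Qᴴ = Q := by
    rw [hQdef, Matrix.conjTranspose_mul, Matrix.conjTranspose_mul,
      Matrix.conjTranspose_conjTranspose, hE2H, Matrix.mul_assoc]
  have hPP : P * P = P := by
    have h : P * P = Wᴴ * (E1 * ((W * Wᴴ) * (E1 * W))) := by
      rw [hPdef]; simp only [Matrix.mul_assoc]
    rw [h, hWWH, Matrix.one_mul, ← Matrix.mul_assoc E1 E1 W, hE1sq]
    simp only [hPdef, Matrix.mul_assoc]
  have hQQ : Q * Q = Q := by
    have h : Q * Q = Wᴴ * (E2 * ((W * Wᴴ) * (E2 * W))) := by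
      rw [hQdef]; simp only [Matrix.mul_assoc]
    rw [h, hWWH, Matrix.one_mul, ← Matrix.mul_assoc E2 E2 W, hE2sq]
    simp only [hQdef, Matrix.mul_assoc]
  have hPQ1 : P + Q = 1 := by
    rw [hPdef, hQdef]
    calc Wᴴ * E1 * W + Wᴴ * E2 * W = Wᴴ * (E1 + E2) * W := by
          rw [Matrix.mul_add, Matrix.add_mul]
      _ = 1 := by rw [hE12, Matrix.mul_one, hWHW]
  -- the two middle computations
  have hFM : F * M = Matrix.fromBlocks (A + Xᴴ) (X + B) (-A + Xᴴ) (-X + B) := by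
    rw [hFdef, hMdef, Matrix.fromBlocks_multiply]
    congr 1 <;> simp <;> module
  have hFMF : F * M * Fᴴ = Matrix.fromBlocks (A + Xᴴ + (X + B)) (-(A + Xᴴ) + (X + B))
      (-A + Xᴴ + (-X + B)) (-(-A + Xᴴ) + (-X + B)) := by
    rw [hFM, hFH, Matrix.fromBlocks_multiply]
    congr 1 <;> simp <;> module
  have hG1 : E1 * (W * M * Wᴴ) * E1 =
      Matrix.fromBlocks ((1 / 2 : ℂ) • (A + B) + (1 / 2 : ℂ) • (X + Xᴴ)) 0 0 0 := by
    have h1 : W * M * Wᴴ = (s * s) • (F * M * Fᴴ) := by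
      rw [hWdef, hWH, Matrix.smul_mul, Matrix.mul_smul, Matrix.smul_mul, smul_smul]
    rw [h1, hs2, hFMF, Matrix.mul_smul, Matrix.smul_mul, hE1def, Matrix.fromBlocks_multiply,
      Matrix.fromBlocks_multiply, Matrix.fromBlocks_smul]
    congr 1 <;> simp <;> module
  have hG2 : E2 * (W * M * Wᴴ) * E2 =
      Matrix.fromBlocks 0 0 0 ((1 / 2 : ℂ) • (A + B) - (1 / 2 : ℂ) • (X + Xᴴ)) := by
    have h1 : W * M * Wᴴ = (s * s) • (F * M * Fᴴ) := by
      rw [hWdef, hWH, Matrix.smul_mul, Matrix.mul_smul, Matrix.smul_mul, smul_smul]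
    rw [h1, hs2, hFMF, Matrix.mul_smul, Matrix.smul_mul, hE2def, Matrix.fromBlocks_multiply,
      Matrix.fromBlocks_multiply, Matrix.fromBlocks_smul]
    congr 1 <;> simp <;> module
  -- conjugations
  have hPMP : P * M * P = Wᴴ * (Matrix.fromBlocks ((1 / 2 : ℂ) • (A + B) +
      (1 / 2 : ℂ) • (X + Xᴴ)) 0 0 0) * W := by
    rw [← hG1, hPdef]
    calc Wᴴ * E1 * W * M * (Wᴴ * E1 * W)
        = Wᴴ * (E1 * (W * M * Wᴴ) * E1) * W := by simp only [Matrix.mul_assoc]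
      _ = _ := rfl
  have hQMQ : Q * M * Q = Wᴴ * (Matrix.fromBlocks 0 0 0 ((1 / 2 : ℂ) • (A + B) -
      (1 / 2 : ℂ) • (X + Xᴴ))) * W := by
    rw [← hG2, hQdef]
    calc Wᴴ * E2 * W * M * (Wᴴ * E2 * W)
        = Wᴴ * (E2 * (W * M * Wᴴ) * E2) * W := by simp only [Matrix.mul_assoc]
      _ = _ := rfl
  -- unitary similarity
  obtain ⟨U', hU'⟩ := my_exists_unitary_conj (S * P)
  obtain ⟨V', hV'⟩ := my_exists_unitary_conj (S * Q)
  have hC1H : (S * P)ᴴ = P * S := by rw [Matrix.conjTranspose_mul, hPH, hSH]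
  have hC2H : (S * Q)ᴴ = Q * S := by rw [Matrix.conjTranspose_mul, hQH, hSH]
  have hC1C1 : (S * P)ᴴ * (S * P) = P * M * P := by
    rw [hC1H]
    calc P * S * (S * P) = P * (S * S) * P := by simp only [Matrix.mul_assoc]
      _ = P * M * P := by rw [hSS]
  have hC2C2 : (S * Q)ᴴ * (S * Q) = Q * M * Q := by
    rw [hC2H]
    calc Q * S * (S * Q) = Q * (S * S) * Q := by simp only [Matrix.mul_assoc]
      _ = Q * M * Q := by rw [hSS]
  have hsum : (S * P) * (S * P)ᴴ + (S * Q) * (S * Q)ᴴ = M := by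
    rw [hC1H, hC2H]
    calc S * P * (P * S) + S * Q * (Q * S)
        = S * (P * P) * S + S * (Q * Q) * S := by simp only [Matrix.mul_assoc]
      _ = S * (P + Q) * S := by rw [hPP, hQQ, Matrix.mul_add, Matrix.add_mul]
      _ = M := by rw [hPQ1, Matrix.mul_one, hSS]
  -- W as a unitary
  have hWmem : W ∈ Matrix.unitaryGroup (Fin n ⊕ Fin n) ℂ := by
    rw [Matrix.mem_unitaryGroup_iff, Matrix.star_eq_conjTranspose]
    exact hWWH
  set Wu : Matrix.unitaryGroup (Fin n ⊕ Fin n) ℂ := ⟨W, hWmem⟩ with hWudef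
  refine ⟨U' * star Wu, V' * star Wu, ?_⟩
  have hcoeU : ((U' * star Wu : Matrix.unitaryGroup (Fin n ⊕ Fin n) ℂ) :
      Matrix (Fin n ⊕ Fin n) (Fin n ⊕ Fin n) ℂ) = (U' : Matrix (Fin n ⊕ Fin n) (Fin n ⊕ Fin n) ℂ) * Wᴴ := by
    simp [hWudef, Matrix.star_eq_conjTranspose]
  have hcoeV : ((V' * star Wu : Matrix.unitaryGroup (Fin n ⊕ Fin n) ℂ) :
      Matrix (Fin n ⊕ Fin n) (Fin n ⊕ Fin n) ℂ) = (V' : Matrix (Fin n ⊕ Fin n) (Fin n ⊕ Fin n) ℂ) * Wᴴ := by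
    simp [hWudef, Matrix.star_eq_conjTranspose]
  rw [hcoeU, hcoeV]
  have hfin1 : ((U' : Matrix (Fin n ⊕ Fin n) (Fin n ⊕ Fin n) ℂ) * Wᴴ) *
      (Matrix.fromBlocks ((1 / 2 : ℂ) • (A + B) +
      (1 / 2 : ℂ) • (X + Xᴴ)) 0 0 0) *
      ((U' : Matrix (Fin n ⊕ Fin n) (Fin n ⊕ Fin n) ℂ) * Wᴴ)ᴴ = (S * P) * (S * P)ᴴ := by
    rw [hU', hC1C1, hPMP]
    rw [Matrix.conjTranspose_mul, Matrix.conjTranspose_conjTranspose]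
    simp only [Matrix.mul_assoc]
  have hfin2 : ((V' : Matrix (Fin n ⊕ Fin n) (Fin n ⊕ Fin n) ℂ) * Wᴴ) *
      (Matrix.fromBlocks 0 0 0 ((1 / 2 : ℂ) • (A + B) -
      (1 / 2 : ℂ) • (X + Xᴴ))) *
      ((V' : Matrix (Fin n ⊕ Fin n) (Fin n ⊕ Fin n) ℂ) * Wᴴ)ᴴ = (S * Q) * (S * Q)ᴴ := by
    rw [hV', hC2C2, hQMQ]
    rw [Matrix.conjTranspose_mul, Matrix.conjTranspose_conjTranspose]
    simp only [Matrix.mul_assoc]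
  rw [hfin1, hfin2, hsum]
end

section
/- Let $A, B \in \mathbb{M}_n^+$. Then for every symmetric norm $\|\cdot\|$ on $\mathbb{M}_{2n}$ one has $\left\| \begin{bmatrix} A & 0 \\ 0 & B \end{bmatrix} \right\| \le \| A + B \|$, where on the right $A+B \in \mathbb{M}_n$ is embedded as the upper-left block of a matrix in $\mathbb{M}_{2n}$. -/
open Matrix
open scoped ComplexOrder

section Aux

variable {m : Type*} [Fintype m] [DecidableEq m]

private lemma SymNorm.neg_eq {N : Matrix m m ℂ → ℝ} (hN : IsSymmetricNorm N)
    (X : Matrix m m ℂ) : N (-X) = N X := by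
  have h := hN.smul (-1) X
  simpa using h

private lemma SymNorm.nonneg {N : Matrix m m ℂ → ℝ} (hN : IsSymmetricNorm N)
    (X : Matrix m m ℂ) : 0 ≤ N X := by
  have h0 : N 0 = 0 := by simpa using hN.smul 0 0
  have h := hN.add_le X (-X)
  rw [add_neg_cancel, h0, SymNorm.neg_eq hN] at h
  linarith

private lemma SymNorm.tri {N : Matrix m m ℂ → ℝ} (hN : IsSymmetricNorm N)
    (X Y : Matrix m m ℂ) : N X ≤ N (X + Y) + N Y := by
  have h := hN.add_le (X + Y) (-Y)
  rwa [add_neg_cancel_right, SymNorm.neg_eq hN] at h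

private lemma SymNorm.conj {N : Matrix m m ℂ → ℝ} (hN : IsSymmetricNorm N)
    (U : Matrix.unitaryGroup m ℂ) (X : Matrix m m ℂ) :
    N ((U : Matrix m m ℂ) * X * star (U : Matrix m m ℂ)) = N X := by
  have h1 := hN.unitary_mul_left U (X * star (U : Matrix m m ℂ))
  have h2 := hN.mul_unitary_right (star U) X
  rw [Matrix.mul_assoc, h1]
  simpa using h2

open scoped MatrixOrder in
private lemma core {n : ℕ} (A B : Matrix (Fin n) (Fin n) ℂ)
    (hA : A.PosSemidef) (hB : B.PosSemidef) (hP : (A + B).PosDef)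
    (N : Matrix (Fin n ⊕ Fin n) (Fin n ⊕ Fin n) ℂ → ℝ) (hN : IsSymmetricNorm N) :
    N (Matrix.fromBlocks A 0 0 B) ≤ N (Matrix.fromBlocks (A + B) 0 0 0) := by
  classical
  have hPsd : (A + B).PosSemidef := hP.posSemidef
  set a := CFC.sqrt A with ha
  set b := CFC.sqrt B with hb
  set R := CFC.sqrt (A + B) with hRdef
  have hRR : R * R = A + B := CFC.sqrt_mul_sqrt_self (A + B) hPsd.nonneg
  have hRH : Rᴴ = R := (CFC.sqrt_nonneg (A + B)).posSemidef.1
  have haa : a * a = A := CFC.sqrt_mul_sqrt_self A hA.nonneg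
  have hbb : b * b = B := CFC.sqrt_mul_sqrt_self B hB.nonneg
  have haH : aᴴ = a := (CFC.sqrt_nonneg A).posSemidef.1
  have hbH : bᴴ = b := (CFC.sqrt_nonneg B).posSemidef.1
  have hRdet : IsUnit R.det := by
    refine isUnit_iff_ne_zero.mpr fun h => ?_
    have h2 : R.det * R.det = (A + B).det := by rw [← Matrix.det_mul, hRR]
    rw [h, mul_zero] at h2
    exact (ne_of_gt hP.det_pos) h2.symm
  set S := R⁻¹ with hSdef
  have hSH : Sᴴ = S := by rw [hSdef, Matrix.conjTranspose_nonsing_inv, hRH]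
  have hSR : S * R = 1 := Matrix.nonsing_inv_mul R hRdet
  have hRS : R * S = 1 := Matrix.mul_nonsing_inv R hRdet
  have hSPS : S * (A + B) * S = 1 := by
    rw [← hRR]
    have h : S * (R * R) * S = (S * R) * (R * S) := by simp only [Matrix.mul_assoc]
    rw [h, hSR, hRS, one_mul]
  have key : ∀ X Y : Matrix (Fin n) (Fin n) ℂ,
      (X * S * (A + B)) * (S * Y) = X * Y := by
    intro X Y
    have h : (X * S * (A + B)) * (S * Y) = X * ((S * (A + B) * S) * Y) := by
      simp only [Matrix.mul_assoc]
    rw [h, hSPS, one_mul]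
  set Vm : Matrix (Fin n ⊕ Fin n) (Fin n) ℂ :=
    Matrix.fromRows (a * S) (b * S) with hVm
  have hVV : Vmᴴ * Vm = 1 := by
    rw [hVm, Matrix.conjTranspose_fromRows_eq_fromCols_conjTranspose,
      Matrix.fromCols_mul_fromRows, Matrix.conjTranspose_mul,
      Matrix.conjTranspose_mul, hSH, haH, hbH]
    have h : S * a * (a * S) + S * b * (b * S) = S * (A + B) * S := by
      rw [← haa, ← hbb]; noncomm_ring
    rw [h, hSPS]
  -- orthonormal columns
  set v : (Fin n ⊕ Fin n) → EuclideanSpace ℂ (Fin n ⊕ Fin n) :=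
    fun j => Sum.elim (fun k => (WithLp.equiv 2 _).symm (fun i => Vm i k))
      (fun _ => 0) j with hv
  have hvon : Orthonormal ℂ (Set.restrict (Set.range Sum.inl) v) := by
    rw [orthonormal_iff_ite]
    rintro ⟨_, j, rfl⟩ ⟨_, k, rfl⟩
    have h := congrFun (congrFun hVV j) k
    rw [Matrix.mul_apply] at h
    simp only [Set.restrict_apply, hv, Sum.elim_inl, PiLp.inner_apply,
      RCLike.inner_apply, WithLp.equiv_symm_apply, WithLp.ofLp_toLp]
    simp only [Matrix.conjTranspose_apply] at h
    change ∑ i, Vm i k * (starRingEnd ℂ) (Vm i j) = _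
    rw [show (∑ i, Vm i k * (starRingEnd ℂ) (Vm i j)) = (1 : Matrix (Fin n) (Fin n) ℂ) j k from by
      rw [← h]; simp only [RCLike.star_def, mul_comm]]
    simp [Matrix.one_apply, Subtype.ext_iff]
  obtain ⟨bas, hbas⟩ := hvon.exists_orthonormalBasis_extension_of_card_eq
    (finrank_euclideanSpace (𝕜 := ℂ) (ι := Fin n ⊕ Fin n))
  set W : Matrix (Fin n ⊕ Fin n) (Fin n ⊕ Fin n) ℂ :=
    Matrix.of (fun i j => bas j i) with hWdef
  have hW1 : Wᴴ * W = 1 := by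
    ext j k
    have hon := bas.orthonormal
    rw [orthonormal_iff_ite] at hon
    have h := hon j k
    rw [PiLp.inner_apply] at h
    simp only [RCLike.inner_apply] at h
    rw [Matrix.mul_apply]
    simp only [Matrix.conjTranspose_apply, hWdef, Matrix.of_apply, Matrix.one_apply]
    rw [← h]; simp only [RCLike.star_def, mul_comm]
  have hWmem : W ∈ Matrix.unitaryGroup (Fin n ⊕ Fin n) ℂ := by
    rw [Matrix.mem_unitaryGroup_iff', Matrix.star_eq_conjTranspose]
    exact hW1
  set V' : Matrix (Fin n ⊕ Fin n) (Fin n) ℂ :=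
    Matrix.of (fun i k => bas (Sum.inr k) i) with hV'def
  have hWeq : W = Matrix.fromCols Vm V' := by
    ext i (j | k)
    · have h := hbas (Sum.inl j) ⟨j, rfl⟩
      have h2 := congrArg (fun f : EuclideanSpace ℂ (Fin n ⊕ Fin n) => f i) h
      simp only [hv, Sum.elim_inl] at h2
      simpa [hWdef, Matrix.fromCols] using h2
    · simp [hWdef, hV'def, Matrix.fromCols]
  set D : Matrix (Fin n ⊕ Fin n) (Fin n ⊕ Fin n) ℂ := Matrix.fromBlocks (A + B) 0 0 0 with hD
  set M : Matrix (Fin n ⊕ Fin n) (Fin n ⊕ Fin n) ℂ :=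
    Matrix.fromBlocks A (a * b) (b * a) B with hM
  have hDW : W * D * Wᴴ = M := by
    rw [hWeq, hD, Matrix.conjTranspose_fromCols_eq_fromRows_conjTranspose,
      Matrix.fromCols_mul_fromBlocks]
    simp only [Matrix.mul_zero, add_zero, zero_add]
    rw [Matrix.fromCols_mul_fromRows]
    simp only [Matrix.zero_mul, add_zero]
    rw [hVm, Matrix.conjTranspose_fromRows_eq_fromCols_conjTranspose,
      Matrix.fromRows_mul, Matrix.fromRows_mul_fromCols,
      Matrix.conjTranspose_mul, Matrix.conjTranspose_mul, hSH, haH, hbH,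
      key, key, key, key, haa, hbb, hM]
  have hNM : N M = N D := by
    rw [← hDW]
    have h1 := SymNorm.conj hN ⟨W, hWmem⟩ D
    exact h1
  -- averaging with J
  set Jm : Matrix (Fin n ⊕ Fin n) (Fin n ⊕ Fin n) ℂ :=
    Matrix.fromBlocks 1 0 0 (-1) with hJdef
  have hJH : Jmᴴ = Jm := by
    simp [hJdef, Matrix.fromBlocks_conjTranspose]
  have hJJ : Jm * Jm = 1 := by
    rw [hJdef, Matrix.fromBlocks_multiply]
    simp [Matrix.fromBlocks_one]
  have hJmem : Jm ∈ Matrix.unitaryGroup (Fin n ⊕ Fin n) ℂ := by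
    rw [Matrix.mem_unitaryGroup_iff, Matrix.star_eq_conjTranspose, hJH]
    exact hJJ
  have hJMJ : Jm * M * Jm = Matrix.fromBlocks A (-(a * b)) (-(b * a)) B := by
    rw [hJdef, hM, Matrix.fromBlocks_multiply, Matrix.fromBlocks_multiply]
    simp
  have hNJMJ : N (Jm * M * Jm) = N M := by
    have h := SymNorm.conj hN ⟨Jm, hJmem⟩ M
    simp only [Matrix.star_eq_conjTranspose] at h
    rw [← h]
    congr 1
    rw [hJH]
  have havg : Matrix.fromBlocks A 0 0 B = (2 : ℂ)⁻¹ • (M + Jm * M * Jm) := by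
    rw [hJMJ, hM, Matrix.fromBlocks_add, Matrix.fromBlocks_smul]
    have h2 : ∀ X : Matrix (Fin n) (Fin n) ℂ, (2 : ℂ)⁻¹ • (X + X) = X := fun X => by
      rw [← two_smul ℂ X, smul_smul, inv_mul_cancel₀ two_ne_zero, one_smul]
    simp [h2]
  have hhalf : ‖(2 : ℂ)⁻¹‖ = 2⁻¹ := by
    rw [norm_inv]
    norm_num
  calc N (Matrix.fromBlocks A 0 0 B) = ‖(2 : ℂ)⁻¹‖ * N (M + Jm * M * Jm) := by
        rw [havg, hN.smul]
    _ ≤ ‖(2 : ℂ)⁻¹‖ * (N M + N (Jm * M * Jm)) := by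
        exact mul_le_mul_of_nonneg_left (hN.add_le _ _) (norm_nonneg _)
    _ = N M := by rw [hNJMJ, hhalf]; ring
    _ = N D := hNM

end Aux

theorem diag_block_norm_bound {n : ℕ} (A B : Matrix (Fin n) (Fin n) ℂ)
    (hA : A.PosSemidef) (hB : B.PosSemidef)
    (N : Matrix (Fin n ⊕ Fin n) (Fin n ⊕ Fin n) ℂ → ℝ) (hN : IsSymmetricNorm N) :
    N (Matrix.fromBlocks A 0 0 B) ≤ N (Matrix.fromBlocks (A + B) 0 0 0) := by
  set E1 : Matrix (Fin n ⊕ Fin n) (Fin n ⊕ Fin n) ℂ := Matrix.fromBlocks 1 0 0 0 with hE1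
  set E2 : Matrix (Fin n ⊕ Fin n) (Fin n ⊕ Fin n) ℂ := Matrix.fromBlocks 0 0 0 1 with hE2
  set c : ℝ := N E1 + N E2 with hc
  have hc0 : 0 ≤ c := add_nonneg (SymNorm.nonneg hN _) (SymNorm.nonneg hN _)
  have key : ∀ ε : ℝ, 0 < ε →
      N (Matrix.fromBlocks A 0 0 B) ≤ N (Matrix.fromBlocks (A + B) 0 0 0) + ε * c := by
    intro ε hε
    have hεC : (0 : ℂ) < (ε : ℂ) := by
      exact Complex.zero_lt_real.mpr hε
    have hεpd : ((ε : ℂ) • (1 : Matrix (Fin n) (Fin n) ℂ)).PosDef := by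
      rw [Matrix.smul_one_eq_diagonal]
      exact Matrix.PosDef.diagonal fun _ => hεC
    have hB' : (B + (ε : ℂ) • 1).PosSemidef := hB.add hεpd.posSemidef
    have hP : (A + (B + (ε : ℂ) • 1)).PosDef := by
      rw [← add_assoc]
      exact Matrix.PosDef.posSemidef_add (hA.add hB) hεpd
    have h := core A (B + (ε : ℂ) • 1) hA hB' hP N hN
    have hnormε : ‖(ε : ℂ)‖ = ε := by
      rw [Complex.norm_real, Real.norm_eq_abs, abs_of_pos hε]
    have hL : Matrix.fromBlocks A 0 0 (B + (ε : ℂ) • 1) =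
        Matrix.fromBlocks A 0 0 B + (ε : ℂ) • E2 := by
      rw [hE2, Matrix.fromBlocks_smul, Matrix.fromBlocks_add]
      simp
    have hR : Matrix.fromBlocks (A + (B + (ε : ℂ) • 1)) 0 0 0 =
        Matrix.fromBlocks (A + B) 0 0 0 + (ε : ℂ) • E1 := by
      rw [hE1, Matrix.fromBlocks_smul, Matrix.fromBlocks_add]
      simp [add_assoc]
    have t1 : N (Matrix.fromBlocks A 0 0 B) ≤
        N (Matrix.fromBlocks A 0 0 (B + (ε : ℂ) • 1)) + ε * N E2 := by
      have := SymNorm.tri hN (Matrix.fromBlocks A 0 0 B) ((ε : ℂ) • E2)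
      rwa [← hL, hN.smul, hnormε] at this
    have t2 : N (Matrix.fromBlocks (A + (B + (ε : ℂ) • 1)) 0 0 0) ≤
        N (Matrix.fromBlocks (A + B) 0 0 0) + ε * N E1 := by
      rw [hR]
      have := hN.add_le (Matrix.fromBlocks (A + B) 0 0 0) ((ε : ℂ) • E1)
      rwa [hN.smul, hnormε] at this
    have : ε * N E2 + ε * N E1 = ε * c := by rw [hc]; ring
    linarith
  refine le_of_forall_pos_le_add fun δ hδ => ?_
  have hd : 0 < δ / (c + 1) := by positivity
  have h := key _ hd
  have h2 : δ / (c + 1) * c ≤ δ := by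
    rw [div_mul_eq_mul_div, div_le_iff₀ (by linarith)]
    nlinarith
  linarith
end
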